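/- If a C¹ vector field A = (A₁, A₂) on ℝ² (or on any simply connected open set) satisfies curl₃ A = ∂x A₂ - ∂y A₁ = 0 everywhere, then there exists a function f with A = grad f, i.e. A₁ = ∂x f and A₂ = ∂y f. -/

import Mathlib

noncomputable def pdx (f : ℝ × ℝ → ℝ) (p : ℝ × ℝ) : ℝ := fderiv ℝ f p (1, 0)
noncomputable def pdy (f : ℝ × ℝ → ℝ) (p : ℝ × ℝ) : ℝ := fderiv ℝ f p (0, 1)

open MeasureTheory intervalIntegral Metric Asymptotics Filter Topology
open scoped Interval

section Aux

variable {A : ℝ × ℝ → ℝ × ℝ}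

/-- derivative of `A` along a horizontal line. -/
lemma aux_line1 (hA : ContDiff ℝ 1 A) (y t : ℝ) :
    HasDerivAt (fun s => A (s, y)) (fderiv ℝ A (t, y) (1, 0)) t := by
  have h : HasDerivAt (fun s : ℝ => (s, y)) ((1 : ℝ), (0 : ℝ)) t :=
    (hasDerivAt_id t).prodMk (hasDerivAt_const t y)
  exact ((hA.differentiable one_ne_zero) (t, y)).hasFDerivAt.comp_hasDerivAt t h

/-- derivative of `A` along a vertical line. -/
lemma aux_line2 (hA : ContDiff ℝ 1 A) (t y : ℝ) :
    HasDerivAt (fun s => A (t, s)) (fderiv ℝ A (t, y) (0, 1)) y := by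
  have h : HasDerivAt (fun s : ℝ => (t, s)) ((0 : ℝ), (1 : ℝ)) y :=
    (hasDerivAt_const y t).prodMk (hasDerivAt_id y)
  exact ((hA.differentiable one_ne_zero) (t, y)).hasFDerivAt.comp_hasDerivAt y h

lemma aux_fst {f : ℝ → ℝ × ℝ} {f' : ℝ × ℝ} {t : ℝ} (h : HasDerivAt f f' t) :
    HasDerivAt (fun s => (f s).1) f'.1 t := by
  simpa using (h.hasFDerivAt.fst).hasDerivAt

lemma aux_snd {f : ℝ → ℝ × ℝ} {f' : ℝ × ℝ} {t : ℝ} (h : HasDerivAt f f' t) :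
    HasDerivAt (fun s => (f s).2) f'.2 t := by
  simpa using (h.hasFDerivAt.snd).hasDerivAt

lemma aux_cont_dir (hA : ContDiff ℝ 1 A) (v : ℝ × ℝ) :
    Continuous fun p => fderiv ℝ A p v :=
  (hA.continuous_fderiv one_ne_zero).clm_apply continuous_const

/-- the curl-free hypothesis rephrased via `fderiv` of `A`. -/
lemma aux_curl (hA : ContDiff ℝ 1 A)
    (hcurl : ∀ p, pdx (fun q => (A q).2) p - pdy (fun q => (A q).1) p = 0) (p : ℝ × ℝ) :
    (fderiv ℝ A p (0, 1)).1 = (fderiv ℝ A p (1, 0)).2 := by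
  have hd := (hA.differentiable one_ne_zero p).hasFDerivAt
  have h1 : fderiv ℝ (fun q => (A q).1) p =
      (ContinuousLinearMap.fst ℝ ℝ ℝ).comp (fderiv ℝ A p) := hd.fst.fderiv
  have h2 : fderiv ℝ (fun q => (A q).2) p =
      (ContinuousLinearMap.snd ℝ ℝ ℝ).comp (fderiv ℝ A p) := hd.snd.fderiv
  have := hcurl p
  simp only [pdx, pdy, h1, h2, ContinuousLinearMap.comp_apply,
    ContinuousLinearMap.coe_fst', ContinuousLinearMap.coe_snd'] at this
  linarith

/-- FTC: integral of the `x`-partial of `A₂` along a horizontal segment. -/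
lemma aux_ftc (hA : ContDiff ℝ 1 A) (a y : ℝ) :
    ∫ t in (0:ℝ)..a, (fderiv ℝ A (t, y) (1, 0)).2 = (A (a, y)).2 - (A (0, y)).2 := by
  apply intervalIntegral.integral_eq_sub_of_hasDerivAt
  · intro t _
    exact aux_snd (aux_line1 hA y t)
  · apply Continuous.intervalIntegrable
    exact ((aux_cont_dir hA (1, 0)).comp
      (continuous_id.prodMk continuous_const)).snd

/-- differentiation under the integral sign for `y ↦ ∫₀ᵃ A₁(t,y) dt`. -/
lemma aux_diff_under (hA : ContDiff ℝ 1 A) (a y : ℝ) :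
    HasDerivAt (fun x => ∫ t in (0:ℝ)..a, (A (t, x)).1)
      (∫ t in (0:ℝ)..a, (fderiv ℝ A (t, y) (0, 1)).1) y := by
  have hcontA : Continuous A := hA.continuous
  have hcontF' : Continuous fun q : ℝ × ℝ => (fderiv ℝ A q (0, 1)).1 :=
    (aux_cont_dir hA (0, 1)).fst
  -- bound on the compact rectangle
  obtain ⟨C, hC⟩ : ∃ C, ∀ q ∈ (Set.uIcc (0:ℝ) a) ×ˢ (Set.Icc (y - 1) (y + 1)),
      ‖(fderiv ℝ A q (0, 1)).1‖ ≤ C :=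
    (isCompact_uIcc.prod isCompact_Icc).exists_bound_of_continuousOn hcontF'.continuousOn
  have key := intervalIntegral.hasDerivAt_integral_of_dominated_loc_of_deriv_le
    (F := fun x t => (A (t, x)).1)
    (F' := fun x t => (fderiv ℝ A (t, x) (0, 1)).1)
    (x₀ := y) (a := (0:ℝ)) (b := a) (μ := volume) (bound := fun _ => C)
    (s := ball y 1) (ball_mem_nhds y one_pos)
    (Eventually.of_forall fun x =>
      ((hcontA.comp (continuous_id.prodMk continuous_const)).fst).aestronglyMeasurable)
    (((hcontA.comp (continuous_id.prodMk continuous_const)).fst).intervalIntegrable 0 a)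
    ((hcontF'.comp (continuous_id.prodMk continuous_const)).aestronglyMeasurable)
    (Eventually.of_forall fun t ht x hx => by
      apply hC
      constructor
      · exact Set.uIoc_subset_uIcc ht
      · have hxy : |x - y| < 1 := by simpa [Real.dist_eq] using (mem_ball.mp hx)
        have h1 := (abs_sub_le_iff.mp hxy.le).1
        have h2 := (abs_sub_le_iff.mp hxy.le).2
        constructor
        · linarith
        · linarith)
    (intervalIntegrable_const)
    (Eventually.of_forall fun t _ x _ => aux_fst (aux_line2 hA t x))
  exact key.2

end Aux

/-- 2D Poincaré lemma: a C¹ curl-free vector field on ℝ² is a gradient. -/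
theorem curl_free_is_gradient (A : ℝ × ℝ → ℝ × ℝ) (hA : ContDiff ℝ 1 A)
    (hcurl : ∀ p, pdx (fun q => (A q).2) p - pdy (fun q => (A q).1) p = 0) :
    ∃ f : ℝ × ℝ → ℝ, ∀ p, (A p).1 = pdx f p ∧ (A p).2 = pdy f p := by
  classical
  have hcontA : Continuous A := hA.continuous
  -- the potential function
  set f : ℝ × ℝ → ℝ := fun p =>
    (∫ t in (0:ℝ)..p.1, (A (t, p.2)).1) + ∫ s in (0:ℝ)..p.2, (A (0, s)).2 with hf
  -- the candidate derivative at p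
  have main : ∀ p : ℝ × ℝ, HasFDerivAt f
      (((ContinuousLinearMap.fst ℝ ℝ ℝ).smulRight (A p).1) +
        ((ContinuousLinearMap.snd ℝ ℝ ℝ).smulRight (A p).2)) p := by
    rintro ⟨a, b⟩
    set L : (ℝ × ℝ) →L[ℝ] ℝ :=
      ((ContinuousLinearMap.fst ℝ ℝ ℝ).smulRight (A (a, b)).1) +
        ((ContinuousLinearMap.snd ℝ ℝ ℝ).smulRight (A (a, b)).2) with hL
    -- G(y) = f(a, y) has derivative A₂(a,y)
    set G : ℝ → ℝ := fun y =>
      (∫ t in (0:ℝ)..a, (A (t, y)).1) + ∫ s in (0:ℝ)..y, (A (0, s)).2 with hG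
    have hGderiv : ∀ y, HasDerivAt G ((A (a, y)).2) y := by
      intro y
      have h1 := aux_diff_under hA a y
      have h2 : HasDerivAt (fun u => ∫ s in (0:ℝ)..u, (A (0, s)).2) ((A (0, y)).2) y := by
        have hc : Continuous fun s : ℝ => (A (0, s)).2 :=
          (hcontA.comp (continuous_const.prodMk continuous_id)).snd
        exact intervalIntegral.integral_hasDerivAt_right (hc.intervalIntegrable 0 y)
          hc.aestronglyMeasurable.stronglyMeasurableAtFilter hc.continuousAt
      have h3 := h1.add h2
      have h4 : (∫ t in (0:ℝ)..a, (fderiv ℝ A (t, y) (0, 1)).1) + (A (0, y)).2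
          = (A (a, y)).2 := by
        have : ∀ t : ℝ, (fderiv ℝ A (t, y) (0, 1)).1 = (fderiv ℝ A (t, y) (1, 0)).2 :=
          fun t => aux_curl hA hcurl (t, y)
        rw [intervalIntegral.integral_congr (fun t _ => this t), aux_ftc hA a y]
        ring
      rw [h4] at h3
      exact h3
    -- decompose the little-o term
    rw [hasFDerivAt_iff_isLittleO]
    have hdecomp : (fun q : ℝ × ℝ => f q - f (a, b) - L (q - (a, b)))
        = (fun q : ℝ × ℝ =>
            ((∫ t in a..q.1, (A (t, q.2)).1) - (q.1 - a) * (A (a, b)).1)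
            + (G q.2 - G b - (q.2 - b) * (A (a, b)).2)) := by
      funext q
      have hint1 : IntervalIntegrable (fun t => (A (t, q.2)).1) volume 0 q.1 :=
        ((hcontA.comp (continuous_id.prodMk continuous_const)).fst).intervalIntegrable 0 q.1
      have hint2 : IntervalIntegrable (fun t => (A (t, q.2)).1) volume 0 a :=
        ((hcontA.comp (continuous_id.prodMk continuous_const)).fst).intervalIntegrable 0 a
      have hsplit := intervalIntegral.integral_interval_sub_left hint1 hint2
      have hLval : L (q - (a, b)) = (q.1 - a) * (A (a, b)).1 + (q.2 - b) * (A (a, b)).2 := by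
        simp [hL, ContinuousLinearMap.smulRight_apply, smul_eq_mul, Prod.fst_sub, Prod.snd_sub]
      simp only [hf, hG, hLval]
      have : (∫ t in a..q.1, (A (t, q.2)).1)
          = (∫ t in (0:ℝ)..q.1, (A (t, q.2)).1) - ∫ t in (0:ℝ)..a, (A (t, q.2)).1 := by
        rw [hsplit]
      rw [this]
      ring
    rw [hdecomp]
    have hT2 : (fun q : ℝ × ℝ => G q.2 - G b - (q.2 - b) * (A (a, b)).2)
        =o[𝓝 (a, b)] fun q : ℝ × ℝ => q - (a, b) := by
      have h := (hGderiv b).hasFDerivAt.isLittleO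
      have htend : Tendsto (fun q : ℝ × ℝ => q.2) (𝓝 (a, b)) (𝓝 b) :=
        continuous_snd.continuousAt
      have h2 := h.comp_tendsto htend
      have h3 : (fun q : ℝ × ℝ => q.2 - b) =O[𝓝 (a, b)] fun q : ℝ × ℝ => q - (a, b) := by
        apply Asymptotics.IsBigO.of_bound 1
        filter_upwards with q
        have : ‖q.2 - b‖ ≤ ‖q - (a, b)‖ := by
          simpa using norm_snd_le (q - (a, b))
        simpa using this
      have h4 := h2.trans_isBigO h3
      simpa [Function.comp_def, smul_eq_mul, mul_comm] using h4
    have hT1 : (fun q : ℝ × ℝ => (∫ t in a..q.1, (A (t, q.2)).1) - (q.1 - a) * (A (a, b)).1)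
        =o[𝓝 (a, b)] fun q : ℝ × ℝ => q - (a, b) := by
      rw [Asymptotics.isLittleO_iff]
      intro c hc
      have hA1cont : ContinuousAt (fun q : ℝ × ℝ => (A q).1) (a, b) :=
        (hcontA.fst).continuousAt
      rcases Metric.continuousAt_iff.mp hA1cont c hc with ⟨δ, hδpos, hδ⟩
      filter_upwards [Metric.ball_mem_nhds (a, b) hδpos] with q hq
      have hqd : dist q (a, b) < δ := mem_ball.mp hq
      have hq1 : |q.1 - a| ≤ dist q (a, b) := by
        rw [← Real.dist_eq, Prod.dist_eq]
        exact le_max_left _ _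
      have hq2 : |q.2 - b| ≤ dist q (a, b) := by
        rw [← Real.dist_eq, Prod.dist_eq]
        exact le_max_right _ _
      -- rewrite the integral difference
      have hint : IntervalIntegrable (fun t => (A (t, q.2)).1) volume a q.1 :=
        ((hcontA.comp (continuous_id.prodMk continuous_const)).fst).intervalIntegrable a q.1
      have heq : (∫ t in a..q.1, (A (t, q.2)).1) - (q.1 - a) * (A (a, b)).1
          = ∫ t in a..q.1, ((A (t, q.2)).1 - (A (a, b)).1) := by
        rw [intervalIntegral.integral_sub hint (intervalIntegrable_const)]
        simp [smul_eq_mul, mul_comm]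
      rw [heq]
      have hbound : ∀ t ∈ Set.uIoc a q.1, ‖(A (t, q.2)).1 - (A (a, b)).1‖ ≤ c := by
        intro t ht
        have hta : |t - a| ≤ |q.1 - a| := by
          rcases Set.mem_uIoc.mp ht with ⟨h1, h2⟩ | ⟨h1, h2⟩
          · rw [abs_of_pos (by linarith), abs_of_pos (by linarith)]; linarith
          · rw [abs_of_nonpos (by linarith), abs_of_neg (by linarith)]; linarith
        have hdist : dist (t, q.2) (a, b) < δ := by
          rw [Prod.dist_eq]
          apply max_lt
          · exact lt_of_le_of_lt (le_trans (by simpa [Real.dist_eq] using hta) hq1) hqd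
          · exact lt_of_le_of_lt (by simpa [Real.dist_eq] using hq2) hqd
        have := hδ hdist
        rw [Real.dist_eq] at this
        exact this.le
      calc ‖∫ t in a..q.1, ((A (t, q.2)).1 - (A (a, b)).1)‖
          ≤ c * |q.1 - a| := intervalIntegral.norm_integral_le_of_norm_le_const hbound
        _ ≤ c * ‖q - (a, b)‖ := by
            apply mul_le_mul_of_nonneg_left _ hc.le
            calc |q.1 - a| ≤ dist q (a, b) := hq1
              _ = ‖q - (a, b)‖ := by rw [dist_eq_norm]
    exact hT1.add hT2
  refine ⟨f, fun p => ?_⟩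
  have hfd := (main p).fderiv
  constructor
  · simp [pdx, hfd, ContinuousLinearMap.smulRight_apply, smul_eq_mul]
  · simp [pdy, hfd, ContinuousLinearMap.smulRight_apply, smul_eq_mul]
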